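/- arXiv:2010.09793 — 3 statements merged into one kernel-verified Lean document; each statement's English description precedes it below -/
import Mathlib

section
/- Let μ be an Ahlfors regular measure of dimension d on E ⊂ ℝⁿ and σ = c H^d|_P a flat measure on an affine d-plane P. Suppose D_{x,Nr}(μ,σ) ≤ 2η, where D_{x,R}(μ,σ) = R^{-d-1} sup |∫φ dμ − ∫φ dσ| over 1-Lipschitz functions φ vanishing outside B(x,R). If N is large enough and η small enough (depending on n, d, and the AR constant of μ), then P meets B(x, Nr/4) and C⁻¹ ≤ c ≤ C, where C depends only on n, d, and the AR constant of μ. -/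
open MeasureTheory Metric Set ENNReal

noncomputable section

/-- `μ` is Ahlfors regular of dimension `d` with constant `C₀` on the set `E`. -/
def AhlforsRegular {n : ℕ} (μ : Measure (EuclideanSpace ℝ (Fin n)))
    (E : Set (EuclideanSpace ℝ (Fin n))) (d C₀ : ℝ) : Prop :=
  ∀ x ∈ E, ∀ r : ℝ, 0 < r →
    ENNReal.ofReal (C₀⁻¹ * r ^ d) ≤ μ (Metric.ball x r) ∧
      μ (Metric.ball x r) ≤ ENNReal.ofReal (C₀ * r ^ d)

/-- The set `B ⊆ E × (0,∞)` satisfies a Carleson packing condition with constant `C`. -/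
def CarlesonPacking {n : ℕ} (μ : Measure (EuclideanSpace ℝ (Fin n)))
    (E : Set (EuclideanSpace ℝ (Fin n))) (d : ℝ)
    (B : Set (EuclideanSpace ℝ (Fin n) × ℝ)) (C : ℝ) : Prop :=
  ∀ x ∈ E, ∀ r : ℝ, 0 < r →
    (∫⁻ y in E ∩ Metric.ball x r, ∫⁻ t in Set.Ioo (0:ℝ) r,
        B.indicator (fun _ => (1:ℝ≥0∞)) (y, t) / ENNReal.ofReal t ∂volume ∂μ)
      ≤ ENNReal.ofReal (C * r ^ d)

namespace FlatAux
variable {X : Type*} [MetricSpace X] [MeasurableSpace X] [OpensMeasurableSpace X]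

omit [MeasurableSpace X] [OpensMeasurableSpace X] in
lemma tent_lipschitz (q : X) (s : ℝ) : LipschitzWith 1 (fun z => max 0 (s - dist z q)) := by
  apply LipschitzWith.of_dist_le_mul
  intro a b
  simp only [NNReal.coe_one, one_mul, Real.dist_eq]
  calc |max 0 (s - dist a q) - max 0 (s - dist b q)|
      = |max (s - dist a q) 0 - max (s - dist b q) 0| := by
        rw [max_comm, max_comm (s - dist b q) 0]
    _ ≤ |(s - dist a q) - (s - dist b q)| := abs_max_sub_max_le_abs _ _ _
    _ = |dist b q - dist a q| := by congr 1; ring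
    _ ≤ dist b a := abs_dist_sub_le _ _ _
    _ = dist a b := dist_comm _ _

omit [MeasurableSpace X] [OpensMeasurableSpace X] in
lemma tent_cont (q : X) (s : ℝ) : Continuous (fun z => max 0 (s - dist z q)) :=
  continuous_const.max (continuous_const.sub (continuous_id.dist continuous_const))

lemma tent_lintegral_le (ν : Measure X) (q : X) {s : ℝ} (hs : 0 ≤ s) :
    ∫⁻ z, ENNReal.ofReal (max 0 (s - dist z q)) ∂ν ≤ ENNReal.ofReal s * ν (ball q s) := by
  calc ∫⁻ z, ENNReal.ofReal (max 0 (s - dist z q)) ∂ν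
      ≤ ∫⁻ z, (ball q s).indicator (fun _ => ENNReal.ofReal s) z ∂ν := by
        refine lintegral_mono fun z => ?_
        by_cases hz : z ∈ ball q s
        · rw [indicator_of_mem hz]
          exact ENNReal.ofReal_le_ofReal (max_le hs (by linarith [dist_nonneg (x := z) (y := q)]))
        · rw [indicator_of_notMem hz]
          have : s ≤ dist z q := by simpa [mem_ball] using hz
          simp [max_eq_left (by linarith : s - dist z q ≤ 0)]
    _ = ENNReal.ofReal s * ν (ball q s) := by
        rw [lintegral_indicator measurableSet_ball, setLIntegral_const]

lemma tent_le_lintegral (ν : Measure X) (q : X) {s : ℝ} :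
    ENNReal.ofReal (s / 2) * ν (ball q (s / 2)) ≤
      ∫⁻ z, ENNReal.ofReal (max 0 (s - dist z q)) ∂ν := by
  calc ENNReal.ofReal (s / 2) * ν (ball q (s / 2))
      = ∫⁻ z, (ball q (s / 2)).indicator (fun _ => ENNReal.ofReal (s / 2)) z ∂ν := by
        rw [lintegral_indicator measurableSet_ball, setLIntegral_const]
    _ ≤ ∫⁻ z, ENNReal.ofReal (max 0 (s - dist z q)) ∂ν := by
        refine lintegral_mono fun z => ?_
        by_cases hz : z ∈ ball q (s / 2)
        · rw [indicator_of_mem hz]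
          have : dist z q < s / 2 := mem_ball.1 hz
          exact ENNReal.ofReal_le_ofReal (le_max_of_le_right (by linarith))
        · simp [indicator_of_notMem hz]

lemma tent_integral_eq (ν : Measure X) (q : X) (s : ℝ) :
    ∫ z, max 0 (s - dist z q) ∂ν
      = (∫⁻ z, ENNReal.ofReal (max 0 (s - dist z q)) ∂ν).toReal :=
  integral_eq_lintegral_of_nonneg_ae (ae_of_all _ fun z => le_max_left _ _)
    (tent_cont q s).aestronglyMeasurable

lemma tent_integral_bounds (ν : Measure X) (q : X) {s : ℝ} (hs : 0 < s)
    (hfin : ν (ball q s) ≠ ⊤) :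
    s / 2 * (ν (ball q (s / 2))).toReal ≤ ∫ z, max 0 (s - dist z q) ∂ν ∧
      ∫ z, max 0 (s - dist z q) ∂ν ≤ s * (ν (ball q s)).toReal := by
  have h1 := tent_lintegral_le ν q hs.le
  have h0 := tent_le_lintegral ν q (s := s)
  have htop : ENNReal.ofReal s * ν (ball q s) ≠ ⊤ :=
    ENNReal.mul_ne_top ENNReal.ofReal_ne_top hfin
  have hne : ∫⁻ z, ENNReal.ofReal (max 0 (s - dist z q)) ∂ν ≠ ⊤ :=
    (lt_of_le_of_lt h1 htop.lt_top).ne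
  rw [tent_integral_eq]
  constructor
  · have := ENNReal.toReal_mono hne h0
    rwa [ENNReal.toReal_mul, ENNReal.toReal_ofReal (by linarith)] at this
  · have := ENNReal.toReal_mono htop h1
    rwa [ENNReal.toReal_mul, ENNReal.toReal_ofReal hs.le] at this

lemma plane_ball {n : ℕ} (d : ℕ) (P : AffineSubspace ℝ (EuclideanSpace ℝ (Fin n)))
    (hP : Module.finrank ℝ P.direction = d) {q : EuclideanSpace ℝ (Fin n)} (hq : q ∈ P)
    (t : ℝ) :
    μH[(d : ℝ)] (ball q t ∩ (P : Set (EuclideanSpace ℝ (Fin n)))) =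
      μH[(d : ℝ)] (ball (0 : EuclideanSpace ℝ (Fin d)) t) := by
  let b := stdOrthonormalBasis ℝ P.direction
  let e0 : EuclideanSpace ℝ (Fin d) ≃ₗᵢ[ℝ]
      EuclideanSpace ℝ (Fin (Module.finrank ℝ P.direction)) :=
    LinearIsometryEquiv.piLpCongrLeft 2 ℝ ℝ (finCongr hP.symm)
  let L : EuclideanSpace ℝ (Fin d) ≃ₗᵢ[ℝ] P.direction := e0.trans b.repr.symm
  set f : EuclideanSpace ℝ (Fin d) → EuclideanSpace ℝ (Fin n) :=
    fun v => (L v : EuclideanSpace ℝ (Fin n)) + q with hf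
  have hiso : Isometry f := by
    refine Isometry.of_dist_eq fun a c => ?_
    calc dist (f a) (f c)
        = dist ((L a : EuclideanSpace ℝ (Fin n))) ((L c : EuclideanSpace ℝ (Fin n))) :=
          dist_add_right _ _ _
      _ = dist (L a) (L c) := (Subtype.dist_eq _ _).symm
      _ = dist a c := L.dist_map a c
  have hf0 : f 0 = q := by simp [hf]
  have himg : f '' ball 0 t = ball q t ∩ (P : Set (EuclideanSpace ℝ (Fin n))) := by
    ext y
    constructor
    · rintro ⟨v, hv, rfl⟩
      refine ⟨?_, ?_⟩
      · rw [mem_ball]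
        have h1 : dist (f v) (f 0) = dist v 0 := hiso.dist_eq v 0
        rw [hf0] at h1
        rw [h1]
        exact mem_ball.1 hv
      · exact AffineSubspace.vadd_mem_of_mem_direction (L v).2 hq
    · rintro ⟨hy, hyP⟩
      have hdir : y - q ∈ P.direction := AffineSubspace.vsub_mem_direction hyP hq
      refine ⟨L.symm ⟨y - q, hdir⟩, ?_, ?_⟩
      · rw [mem_ball, dist_zero_right]
        have h2 : ‖L.symm ⟨y - q, hdir⟩‖ = ‖(⟨y - q, hdir⟩ : P.direction)‖ := L.symm.norm_map _
        rw [h2]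
        have h3 : ‖(⟨y - q, hdir⟩ : P.direction)‖ = ‖y - q‖ := rfl
        rw [h3, ← dist_eq_norm]
        exact mem_ball.1 hy
      · simp [hf]
  rw [← himg, hiso.hausdorffMeasure_image (Or.inl (by positivity))]

lemma haar_inst (d : ℕ) :
    Measure.IsAddHaarMeasure (μH[(d : ℝ)] : Measure (EuclideanSpace ℝ (Fin d))) := by
  have h := MeasureTheory.isAddHaarMeasure_hausdorffMeasure (E := EuclideanSpace ℝ (Fin d))
  simpa [finrank_euclideanSpace_fin] using h

lemma ball_haar (d : ℕ) (hd : 0 < d) {t : ℝ} (ht : 0 ≤ t) :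
    μH[(d : ℝ)] (ball (0 : EuclideanSpace ℝ (Fin d)) t) =
      ENNReal.ofReal (t ^ d) * μH[(d : ℝ)] (ball (0 : EuclideanSpace ℝ (Fin d)) 1) := by
  haveI : Nonempty (Fin d) := ⟨⟨0, hd⟩⟩
  haveI : Nontrivial (EuclideanSpace ℝ (Fin d)) := inferInstance
  haveI := haar_inst d
  have h := Measure.addHaar_ball (μ := (μH[(d : ℝ)] : Measure (EuclideanSpace ℝ (Fin d))))
    (0 : EuclideanSpace ℝ (Fin d)) ht
  simpa [finrank_euclideanSpace_fin] using h

lemma ball_pos (d : ℕ) :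
    0 < μH[(d : ℝ)] (ball (0 : EuclideanSpace ℝ (Fin d)) 1) := by
  haveI := haar_inst d
  exact measure_ball_pos _ _ one_pos

lemma ball_fin (d : ℕ) :
    μH[(d : ℝ)] (ball (0 : EuclideanSpace ℝ (Fin d)) 1) < ⊤ := by
  haveI := haar_inst d
  exact measure_ball_lt_top

end FlatAux

set_option maxHeartbeats 1000000 in
/-- If `μ` is Ahlfors regular of dimension `d` and the localized Wasserstein distance
`D_{x,Nr}(μ, σ)` to the flat measure `σ = c H^d|_P` is at most `2η`, with `N` large and `η`
small (depending only on `n`, `d`, and the AR constant), then `P` meets `B(x, Nr/4)` and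
`C⁻¹ ≤ c ≤ C` for a constant depending only on `n`, `d`, and the AR constant. -/
theorem flat_measure_normalization (n d : ℕ) (C₀ : ℝ) (hdn : d < n) (hd : 0 < d)
    (hC₀ : 1 ≤ C₀) :
    ∃ N₀ η₀ C : ℝ, 0 < η₀ ∧ 1 ≤ C ∧
      ∀ (μ : Measure (EuclideanSpace ℝ (Fin n))) (E : Set (EuclideanSpace ℝ (Fin n)))
        (P : AffineSubspace ℝ (EuclideanSpace ℝ (Fin n)))
        (x : EuclideanSpace ℝ (Fin n)) (r N η c : ℝ),
        AhlforsRegular μ E (d : ℝ) C₀ → x ∈ E → 0 < r → N₀ ≤ N → 0 < η → η ≤ η₀ → 0 < c →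
        Module.finrank ℝ P.direction = d →
        (P : Set (EuclideanSpace ℝ (Fin n))).Nonempty →
        (∀ φ : EuclideanSpace ℝ (Fin n) → ℝ, LipschitzWith 1 φ →
          (∀ z ∉ Metric.ball x (N * r), φ z = 0) →
          |(∫ z, φ z ∂μ) -
              ∫ z, φ z ∂((ENNReal.ofReal c) •
                (μH[(d : ℝ)]).restrict (P : Set (EuclideanSpace ℝ (Fin n))))|
            ≤ 2 * η * (N * r) ^ ((d : ℝ) + 1)) →
        ((P : Set (EuclideanSpace ℝ (Fin n))) ∩ Metric.ball x (N * r / 4)).Nonempty ∧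
          C⁻¹ ≤ c ∧ c ≤ C := by
  have hC₀pos : (0:ℝ) < C₀ := lt_of_lt_of_le one_pos hC₀
  set ωE := μH[(d : ℝ)] (ball (0 : EuclideanSpace ℝ (Fin d)) 1) with hωE
  set ω : ℝ := ωE.toReal with hω
  have hωpos : 0 < ω := ENNReal.toReal_pos (FlatAux.ball_pos d).ne' (FlatAux.ball_fin d).ne
  refine ⟨1, C₀⁻¹ / (4 * 8 ^ (d+1)),
    max (max 1 (2 * 4 ^ (d+1) * C₀ / ω)) (4 ^ (d+1) * C₀ * ω), by positivity,
    le_max_of_le_left (le_max_left _ _), ?_⟩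
  intro μ E P x r N η c hAR hx hr hN hη hηle hc hPd hPne hφ
  set σ : Measure (EuclideanSpace ℝ (Fin n)) :=
    (ENNReal.ofReal c) • (μH[(d : ℝ)]).restrict (P : Set (EuclideanSpace ℝ (Fin n))) with hσdef
  set R := N * r with hRdef
  have hRpos : 0 < R := mul_pos (lt_of_lt_of_le one_pos hN) hr
  have hA : R ^ ((d : ℝ) + 1) = R ^ (d + 1) := by
    rw [show ((d : ℝ) + 1) = ((d + 1 : ℕ) : ℝ) by push_cast; ring, Real.rpow_natCast]
  set A := R ^ (d + 1) with hAdef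
  have hApos : 0 < A := pow_pos hRpos _
  have h4pos : (0:ℝ) < 4 ^ (d+1) := by positivity
  have h8pos : (0:ℝ) < 8 ^ (d+1) := by positivity
  have h8ge1 : (1:ℝ) ≤ 8 ^ (d+1) := by
    have := pow_le_pow_left₀ (by norm_num : (0:ℝ) ≤ 1) (by norm_num : (1:ℝ) ≤ 8) (d+1)
    simpa using this
  have h48 : (4:ℝ) ^ (d+1) ≤ 8 ^ (d+1) :=
    pow_le_pow_left₀ (by norm_num) (by norm_num) _
  have hC₀inv : C₀⁻¹ ≤ 1 := inv_le_one_of_one_le₀ hC₀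
  have hη2 : 2 * η ≤ C₀⁻¹ / (2 * 8 ^ (d+1)) := by
    calc 2 * η ≤ 2 * (C₀⁻¹ / (4 * 8 ^ (d+1))) := by linarith
      _ = C₀⁻¹ / (2 * 8 ^ (d+1)) := by
          field_simp
          ring
  -- Ahlfors regularity facts
  have hμfact : ∀ t : ℝ, 0 < t →
      C₀⁻¹ * t ^ d ≤ (μ (ball x t)).toReal ∧ (μ (ball x t)).toReal ≤ C₀ * t ^ d ∧
        μ (ball x t) ≠ ⊤ := by
    intro t ht
    obtain ⟨h1, h2⟩ := hAR x hx t ht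
    rw [Real.rpow_natCast] at h1 h2
    have hne : μ (ball x t) ≠ ⊤ := (lt_of_le_of_lt h2 ofReal_lt_top).ne
    refine ⟨?_, ?_, hne⟩
    · have := ENNReal.toReal_mono hne h1
      rwa [ENNReal.toReal_ofReal (by positivity)] at this
    · have := ENNReal.toReal_mono ofReal_ne_top h2
      rwa [ENNReal.toReal_ofReal (by positivity)] at this
  have hσball : ∀ (q : EuclideanSpace ℝ (Fin n)) (t : ℝ),
      σ (ball q t) = ENNReal.ofReal c *
        μH[(d : ℝ)] (ball q t ∩ (P : Set (EuclideanSpace ℝ (Fin n)))) := by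
    intro q t
    rw [hσdef, Measure.smul_apply, smul_eq_mul, Measure.restrict_apply measurableSet_ball]
  -- Part 1: P meets the ball B(x, R/4)
  have hmeet : ((P : Set (EuclideanSpace ℝ (Fin n))) ∩ ball x (R / 4)).Nonempty := by
    by_contra hcon
    rw [not_nonempty_iff_eq_empty] at hcon
    have hσ0 : σ (ball x (R/4)) = 0 := by
      rw [hσball]
      have hdisj : ball x (R/4) ∩ (P : Set (EuclideanSpace ℝ (Fin n))) = ∅ := by
        rw [inter_comm, hcon]
      rw [hdisj, measure_empty, mul_zero]
    have hbσ := FlatAux.tent_integral_bounds σ x (by positivity : (0:ℝ) < R/4)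
      (by simp [hσ0])
    have hσint0 : (∫ z, max 0 (R/4 - dist z x) ∂σ) = 0 := by
      refine le_antisymm ?_ ?_
      · have h := hbσ.2
        rw [hσ0] at h
        simpa using h
      · refine le_trans ?_ hbσ.1
        positivity
    have hbμ := FlatAux.tent_integral_bounds μ x (by positivity : (0:ℝ) < R/4)
      (hμfact (R/4) (by positivity)).2.2
    have h42 : R/4/2 = R/8 := by ring
    rw [h42] at hbμ
    have hsupp : ∀ z ∉ ball x R, max 0 (R/4 - dist z x) = 0 := by
      intro z hz
      have : R ≤ dist z x := by simpa [mem_ball] using hz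
      exact max_eq_left (by linarith)
    have key := hφ _ (FlatAux.tent_lipschitz x (R/4)) hsupp
    rw [hA, hσint0, sub_zero] at key
    have hμlow : C₀⁻¹ * (R/8) ^ d * (R/8) ≤ ∫ z, max 0 (R/4 - dist z x) ∂μ := by
      refine le_trans ?_ hbμ.1
      have h := (hμfact (R/8) (by positivity)).1
      nlinarith [hRpos]
    have habs : (∫ z, max 0 (R/4 - dist z x) ∂μ) ≤ 2 * η * A := le_trans (le_abs_self _) key
    have hRA : (R/8) ^ d * (R/8) = A / 8 ^ (d+1) := by
      rw [hAdef, ← pow_succ, div_pow]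
    have hfinal : C₀⁻¹ * (A / 8 ^ (d+1)) ≤ 2 * η * A := by
      calc C₀⁻¹ * (A / 8 ^ (d+1)) = C₀⁻¹ * (R/8) ^ d * (R/8) := by rw [← hRA]; ring
        _ ≤ _ := le_trans hμlow habs
    have hstep : C₀⁻¹ * (A / 8 ^ (d+1)) ≤ C₀⁻¹ / (2 * 8 ^ (d+1)) * A :=
      le_trans hfinal (mul_le_mul_of_nonneg_right hη2 hApos.le)
    have e : C₀⁻¹ * (A / 8 ^ (d+1)) = 2 * (C₀⁻¹ / (2 * 8 ^ (d+1)) * A) := by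
      field_simp
    have hXpos : 0 < C₀⁻¹ / (2 * 8 ^ (d+1)) * A := by positivity
    rw [e] at hstep
    linarith
  obtain ⟨p, hpP, hpball⟩ := id hmeet
  have hpx : dist p x < R / 4 := mem_ball.1 hpball
  have hplane : ∀ t : ℝ, 0 ≤ t →
      μH[(d : ℝ)] (ball p t ∩ (P : Set (EuclideanSpace ℝ (Fin n)))) =
        ENNReal.ofReal (t ^ d) * ωE := by
    intro t ht
    rw [FlatAux.plane_ball d P hPd hpP t, FlatAux.ball_haar d hd ht, hωE]
  have hωEne : ωE ≠ ⊤ := (FlatAux.ball_fin d).ne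
  have hσp : ∀ t : ℝ, 0 ≤ t →
      σ (ball p t) = ENNReal.ofReal c * (ENNReal.ofReal (t ^ d) * ωE) := by
    intro t ht
    rw [hσball, hplane t ht]
  have hσpreal : ∀ t : ℝ, 0 ≤ t → (σ (ball p t)).toReal = c * (t ^ d * ω) := by
    intro t ht
    rw [hσp t ht, ENNReal.toReal_mul, ENNReal.toReal_mul, ENNReal.toReal_ofReal hc.le,
      ENNReal.toReal_ofReal (by positivity), ← hω]
  have hσpne : ∀ t : ℝ, 0 ≤ t → σ (ball p t) ≠ ⊤ := by
    intro t ht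
    rw [hσp t ht]
    exact ENNReal.mul_ne_top ofReal_ne_top (ENNReal.mul_ne_top ofReal_ne_top hωEne)
  have hsub : ball p (R/2) ⊆ ball x R := ball_subset_ball' (by linarith)
  have h22 : R/2/2 = R/4 := by ring
  -- Part 2 computation: upper bound on c * ω
  have hcub : c * ω ≤ 4 ^ (d+1) * C₀ := by
    have hbσ := FlatAux.tent_integral_bounds σ p (by positivity : (0:ℝ) < R/2)
      (hσpne (R/2) (by positivity))
    have hμpne : μ (ball p (R/2)) ≠ ⊤ :=
      ne_top_of_le_ne_top (hμfact R hRpos).2.2 (measure_mono hsub)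
    have hbμ := FlatAux.tent_integral_bounds μ p (by positivity : (0:ℝ) < R/2) hμpne
    rw [h22] at hbσ hbμ
    have hsupp : ∀ z ∉ ball x R, max 0 (R/2 - dist z p) = 0 := by
      intro z hz
      have h1 : R ≤ dist z x := by simpa [mem_ball] using hz
      have h2 : dist z x ≤ dist z p + dist p x := dist_triangle z p x
      exact max_eq_left (by linarith)
    have key := hφ _ (FlatAux.tent_lipschitz p (R/2)) hsupp
    rw [hA] at key
    have h1 : ∫ z, max 0 (R/2 - dist z p) ∂σ ≤ ∫ z, max 0 (R/2 - dist z p) ∂μ + 2*η*A := by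
      have h := (abs_le.1 key).1
      linarith
    have h2 : R/4 * (c * ((R/4) ^ d * ω)) ≤ ∫ z, max 0 (R/2 - dist z p) ∂σ := by
      have h := hbσ.1
      rwa [hσpreal (R/4) (by positivity)] at h
    have h3 : ∫ z, max 0 (R/2 - dist z p) ∂μ ≤ R/2 * (C₀ * R ^ d) := by
      refine le_trans hbμ.2 ?_
      have hle : (μ (ball p (R/2))).toReal ≤ (μ (ball x R)).toReal :=
        ENNReal.toReal_mono (hμfact R hRpos).2.2 (measure_mono hsub)
      have hx2 : (μ (ball p (R/2))).toReal ≤ C₀ * R ^ d := le_trans hle (hμfact R hRpos).2.1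
      exact mul_le_mul_of_nonneg_left hx2 (by positivity)
    have e1 : R/4 * (c * ((R/4) ^ d * ω)) = c * ω * (A / 4 ^ (d+1)) := by
      rw [hAdef]
      field_simp
      linear_combination (R * R ^ d * 4) * (by rw [← mul_pow]; norm_num : (1/4:ℝ)^d * 4^d = 1)
    have e2 : R/2 * (C₀ * R ^ d) = C₀/2 * A := by
      rw [hAdef]
      ring
    have h4 : 2*η*A ≤ C₀/2 * A := by
      have h5 : 2*η ≤ C₀/2 := by
        have h6 : C₀⁻¹ / (2 * 8 ^ (d+1)) ≤ 1/2 := by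
          rw [div_le_div_iff₀ (by positivity) (by norm_num)]
          nlinarith
        have h7 : (1:ℝ)/2 ≤ C₀/2 := by linarith
        linarith
      exact mul_le_mul_of_nonneg_right h5 hApos.le
    have hfin2 : c * ω * (A / 4 ^ (d+1)) ≤ C₀ * A := by
      rw [← e1]
      calc R/4 * (c * ((R/4) ^ d * ω)) ≤ ∫ z, max 0 (R/2 - dist z p) ∂σ := h2
        _ ≤ R/2 * (C₀ * R ^ d) + 2*η*A := by linarith
        _ ≤ C₀/2 * A + C₀/2 * A := by rw [e2] at h3; linarith
        _ = C₀ * A := by ring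
    have := mul_le_mul_of_nonneg_right hfin2
      (le_of_lt (show (0:ℝ) < 4 ^ (d+1) / A by positivity))
    calc c * ω = c * ω * (A / 4 ^ (d+1)) * (4 ^ (d+1) / A) := by
          field_simp
      _ ≤ C₀ * A * (4 ^ (d+1) / A) := this
      _ = 4 ^ (d+1) * C₀ := by field_simp
  -- Part 3 computation: lower bound on c * ω
  have hclb : C₀⁻¹ / 4 ^ (d+1) ≤ c * ω := by
    have hσxle : σ (ball x (R/2)) ≤ ENNReal.ofReal c * (ENNReal.ofReal (R ^ d) * ωE) := by
      rw [hσball, ← hplane R hRpos.le]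
      refine mul_le_mul_right (measure_mono ?_) _
      refine inter_subset_inter_left _ ?_
      refine ball_subset_ball' ?_
      rw [dist_comm]
      linarith
    have hrhsne : ENNReal.ofReal c * (ENNReal.ofReal (R ^ d) * ωE) ≠ ⊤ :=
      ENNReal.mul_ne_top ofReal_ne_top (ENNReal.mul_ne_top ofReal_ne_top hωEne)
    have hσxne : σ (ball x (R/2)) ≠ ⊤ := ne_top_of_le_ne_top hrhsne hσxle
    have hσxreal : (σ (ball x (R/2))).toReal ≤ c * (R ^ d * ω) := by
      have h := ENNReal.toReal_mono hrhsne hσxle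
      rwa [ENNReal.toReal_mul, ENNReal.toReal_mul, ENNReal.toReal_ofReal hc.le,
        ENNReal.toReal_ofReal (by positivity), ← hω] at h
    have hbσ := FlatAux.tent_integral_bounds σ x (by positivity : (0:ℝ) < R/2) hσxne
    have hbμ := FlatAux.tent_integral_bounds μ x (by positivity : (0:ℝ) < R/2)
      (hμfact (R/2) (by positivity)).2.2
    rw [h22] at hbσ hbμ
    have hsupp : ∀ z ∉ ball x R, max 0 (R/2 - dist z x) = 0 := by
      intro z hz
      have : R ≤ dist z x := by simpa [mem_ball] using hz
      exact max_eq_left (by linarith)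
    have key := hφ _ (FlatAux.tent_lipschitz x (R/2)) hsupp
    rw [hA] at key
    have h1 : ∫ z, max 0 (R/2 - dist z x) ∂μ ≤ ∫ z, max 0 (R/2 - dist z x) ∂σ + 2*η*A := by
      have h := (abs_le.1 key).2
      linarith
    have h2 : R/4 * (C₀⁻¹ * (R/4) ^ d) ≤ ∫ z, max 0 (R/2 - dist z x) ∂μ := by
      refine le_trans ?_ hbμ.1
      exact mul_le_mul_of_nonneg_left (hμfact (R/4) (by positivity)).1 (by positivity)
    have h3 : ∫ z, max 0 (R/2 - dist z x) ∂σ ≤ R/2 * (c * (R ^ d * ω)) := by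
      refine le_trans hbσ.2 ?_
      exact mul_le_mul_of_nonneg_left hσxreal (by positivity)
    have e1 : R/4 * (C₀⁻¹ * (R/4) ^ d) = C₀⁻¹ / 4 ^ (d+1) * A := by
      rw [hAdef]
      field_simp
      linear_combination (R * R ^ d * 4) * (by rw [← mul_pow]; norm_num : (1/4:ℝ)^d * 4^d = 1)
    have e2 : R/2 * (c * (R ^ d * ω)) = c * ω / 2 * A := by
      rw [hAdef]
      ring
    have hfin3 : C₀⁻¹ / 4 ^ (d+1) * A ≤ c * ω / 2 * A + C₀⁻¹ / (2 * 4 ^ (d+1)) * A := by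
      have hη3 : 2*η*A ≤ C₀⁻¹ / (2 * 4 ^ (d+1)) * A := by
        refine mul_le_mul_of_nonneg_right ?_ hApos.le
        refine le_trans hη2 ?_
        exact div_le_div_of_nonneg_left (by positivity) (by positivity) (by linarith)
      calc C₀⁻¹ / 4 ^ (d+1) * A = R/4 * (C₀⁻¹ * (R/4) ^ d) := e1.symm
        _ ≤ ∫ z, max 0 (R/2 - dist z x) ∂μ := h2
        _ ≤ ∫ z, max 0 (R/2 - dist z x) ∂σ + 2*η*A := h1
        _ ≤ R/2 * (c * (R ^ d * ω)) + C₀⁻¹ / (2 * 4 ^ (d+1)) * A := by linarith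
        _ = c * ω / 2 * A + C₀⁻¹ / (2 * 4 ^ (d+1)) * A := by rw [e2]
    have hdiv : C₀⁻¹ / 4 ^ (d+1) ≤ c * ω / 2 + C₀⁻¹ / (2 * 4 ^ (d+1)) := by
      refine le_of_mul_le_mul_right ?_ hApos
      calc C₀⁻¹ / 4 ^ (d+1) * A ≤ c * ω / 2 * A + C₀⁻¹ / (2 * 4 ^ (d+1)) * A := hfin3
        _ = (c * ω / 2 + C₀⁻¹ / (2 * 4 ^ (d+1))) * A := by ring
    have e3 : C₀⁻¹ / 4 ^ (d+1) = 2 * (C₀⁻¹ / (2 * 4 ^ (d+1))) := by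
      field_simp
    linarith
  refine ⟨hmeet, ?_, ?_⟩
  · -- goal : C⁻¹ ≤ c
    ( have hCpos : (0:ℝ) < max (max 1 (2 * 4 ^ (d+1) * C₀ / ω)) (4 ^ (d+1) * C₀ * ω) :=
        lt_of_lt_of_le one_pos (le_max_of_le_left (le_max_left _ _))
      rw [inv_eq_one_div, div_le_iff₀ hCpos]
      have hstep1 : C₀⁻¹ ≤ c * ω * 4 ^ (d+1) := by
        rw [div_le_iff₀ h4pos] at hclb
        linarith
      have hstep2 : 1 ≤ c * ω * 4 ^ (d+1) * C₀ := by
        have h := mul_le_mul_of_nonneg_right hstep1 hC₀pos.le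
        rwa [inv_mul_cancel₀ hC₀pos.ne'] at h
      have hstep3 : c * (4 ^ (d+1) * C₀ * ω) ≤
          c * max (max 1 (2 * 4 ^ (d+1) * C₀ / ω)) (4 ^ (d+1) * C₀ * ω) :=
        mul_le_mul_of_nonneg_left (le_max_right _ _) hc.le
      calc (1:ℝ) ≤ c * ω * 4 ^ (d+1) * C₀ := hstep2
        _ = c * (4 ^ (d+1) * C₀ * ω) := by ring
        _ ≤ _ := hstep3 )
  · -- goal : c ≤ C
    ( refine le_trans ?_ (le_max_of_le_left (le_max_right 1 (2 * 4 ^ (d+1) * C₀ / ω)))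
      rw [le_div_iff₀ hωpos]
      nlinarith [hcub, h4pos, hC₀pos] )
end
end

section
/- With μ Ahlfors regular of dimension d on E, σ = c H^d|_P flat with D_{x,Nr}(μ,σ) ≤ 2η, and N large, η small as above: every z ∈ E ∩ B(x, Nr/3) satisfies dist(z, P) ≤ η₁ r, where η₁ = C₁ N η^{1/(d+1)} and C₁ depends only on n, d, and the AR constant of μ. -/
open MeasureTheory Metric Set ENNReal

noncomputable section

/-- If `D_{x,Nr}(μ, σ) ≤ 2η` for a flat measure `σ = c H^d|_P`, with `N` large and `η` small,
then every point of `E ∩ B(x, Nr/3)` lies within `η₁ r` of `P`, with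
`η₁ = C₁ N η^{1/(d+1)}` and `C₁` depending only on `n`, `d`, and the AR constant of `μ`. -/
theorem support_close_to_plane (n d : ℕ) (C₀ : ℝ) (hdn : d < n) (hd : 0 < d)
    (hC₀ : 1 ≤ C₀) :
    ∃ N₀ η₀ C₁ : ℝ, 0 < η₀ ∧ 1 ≤ C₁ ∧
      ∀ (μ : Measure (EuclideanSpace ℝ (Fin n))) (E : Set (EuclideanSpace ℝ (Fin n)))
        (P : AffineSubspace ℝ (EuclideanSpace ℝ (Fin n)))
        (x : EuclideanSpace ℝ (Fin n)) (r N η c : ℝ),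
        AhlforsRegular μ E (d : ℝ) C₀ → x ∈ E → 0 < r → N₀ ≤ N → 0 < η → η ≤ η₀ → 0 < c →
        Module.finrank ℝ P.direction = d →
        (P : Set (EuclideanSpace ℝ (Fin n))).Nonempty →
        (∀ φ : EuclideanSpace ℝ (Fin n) → ℝ, LipschitzWith 1 φ →
          (∀ z ∉ Metric.ball x (N * r), φ z = 0) →
          |(∫ z, φ z ∂μ) -
              ∫ z, φ z ∂((ENNReal.ofReal c) •
                (μH[(d : ℝ)]).restrict (P : Set (EuclideanSpace ℝ (Fin n))))|
            ≤ 2 * η * (N * r) ^ ((d : ℝ) + 1)) →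
        ∀ z ∈ E ∩ Metric.ball x (N * r / 3),
          Metric.infDist z (P : Set (EuclideanSpace ℝ (Fin n)))
            ≤ C₁ * N * η ^ (1 / ((d : ℝ) + 1)) * r := by
  have hC₀0 : (0:ℝ) < C₀ := lt_of_lt_of_le one_pos hC₀
  refine ⟨1, ((32*C₀)⁻¹)^(d+1), 8*C₀, by positivity, by linarith, ?_⟩
  intro μ E P x r N η c hAR hx hr hN hη hηη₀ hc hrank hPne hD z hz
  obtain ⟨hzE, hzB⟩ := hz
  rw [Metric.mem_ball] at hzB
  have hNpos : (0:ℝ) < N := lt_of_lt_of_le one_pos hN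
  have hNr : 0 < N * r := by positivity
  set η' : ℝ := η ^ (1 / ((d:ℝ) + 1)) with hη'def
  have hd1 : ((d:ℝ) + 1) ≠ 0 := by positivity
  have hη'pos : 0 < η' := Real.rpow_pos_of_pos hη _
  have hexp : (0:ℝ) ≤ 1 / ((d:ℝ) + 1) := by positivity
  -- η' ≤ (32 C₀)⁻¹
  have hη'le : η' ≤ (32*C₀)⁻¹ := by
    have h1 : η' ≤ (((32*C₀)⁻¹)^(d+1) : ℝ) ^ (1 / ((d:ℝ) + 1)) :=
      Real.rpow_le_rpow hη.le hηη₀ hexp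
    have h2 : (((32*C₀)⁻¹)^(d+1) : ℝ) ^ (1 / ((d:ℝ) + 1)) = (32*C₀)⁻¹ := by
      rw [← Real.rpow_natCast ((32*C₀)⁻¹) (d+1), ← Real.rpow_mul (by positivity)]
      rw [show ((d+1 : ℕ) : ℝ) * (1 / ((d:ℝ)+1)) = 1 by push_cast; field_simp]
      exact Real.rpow_one _
    rw [h2] at h1; exact h1
  -- trivial case
  rcases le_or_gt (Metric.infDist z (P : Set (EuclideanSpace ℝ (Fin n)))) 0 with h0 | h0
  · exact h0.trans (by positivity)
  set t : ℝ := min (Metric.infDist z (P : Set (EuclideanSpace ℝ (Fin n)))) (N*r/3) with htdef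
  have htpos : 0 < t := lt_min h0 (by positivity)
  have htdist : t ≤ Metric.infDist z (P : Set (EuclideanSpace ℝ (Fin n))) := min_le_left _ _
  have htNr : t ≤ N*r/3 := min_le_right _ _
  -- the bump function
  set φ : EuclideanSpace ℝ (Fin n) → ℝ := fun y => max (t/2 - dist y z) 0 with hφdef
  have hφ0 : ∀ y, t/2 ≤ dist y z → φ y = 0 := fun y hy => max_eq_right (by linarith)
  have hφle : ∀ y, φ y ≤ t/2 := fun y => by
    simp only [hφdef]
    have := dist_nonneg (x := y) (y := z)
    exact max_le (by linarith) (by linarith)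
  have hφnn : ∀ y, 0 ≤ φ y := fun y => le_max_right _ _
  have hlip : LipschitzWith 1 φ := by
    have h := ((LipschitzWith.const (α := EuclideanSpace ℝ (Fin n)) (t/2)).sub
      (LipschitzWith.dist_left z)).max_const 0
    simpa using h
  -- vanishing outside B(x, Nr)
  have hvanish : ∀ y, y ∉ Metric.ball x (N * r) → φ y = 0 := by
    intro y hy
    rw [Metric.mem_ball, not_lt] at hy
    have h1 : dist y x ≤ dist y z + dist z x := dist_triangle y z x
    exact hφ0 y (by linarith)
  -- σ-integral vanishes
  have hσ : (∫ y, φ y ∂((ENNReal.ofReal c) •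
      (μH[(d : ℝ)]).restrict (P : Set (EuclideanSpace ℝ (Fin n))))) = 0 := by
    rw [integral_smul_measure]
    have : (∫ y in (P : Set (EuclideanSpace ℝ (Fin n))), φ y ∂(μH[(d : ℝ)])) = 0 := by
      apply setIntegral_eq_zero_of_forall_eq_zero
      intro p hp
      apply hφ0
      have h1 : Metric.infDist z (P : Set (EuclideanSpace ℝ (Fin n))) ≤ dist z p :=
        Metric.infDist_le_dist_of_mem hp
      rw [dist_comm]
      linarith
    rw [this, smul_zero]
  -- integrability
  have hball := hAR z hzE t htpos
  have hflt : μ (Metric.ball z t) < ⊤ := lt_of_le_of_lt hball.2 ENNReal.ofReal_lt_top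
  have hInt : Integrable φ μ := by
    apply Integrable.mono' ((integrable_indicator_iff measurableSet_ball).2
      (integrableOn_const (C := t/2) hflt.ne))
      (hlip.continuous.aestronglyMeasurable)
    filter_upwards with y
    by_cases hy : y ∈ Metric.ball z t
    · rw [Set.indicator_of_mem hy]
      rw [Real.norm_eq_abs, abs_of_nonneg (hφnn y)]
      exact hφle y
    · rw [Set.indicator_of_notMem hy]
      rw [Metric.mem_ball, not_lt] at hy
      rw [hφ0 y (by linarith), norm_zero]
  -- lower bound on the μ-integral
  have hball4 := hAR z hzE (t/4) (by positivity)
  have hflt4 : μ (Metric.ball z (t/4)) ≠ ⊤ :=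
    (lt_of_le_of_lt hball4.2 ENNReal.ofReal_lt_top).ne
  have hmeas : C₀⁻¹ * (t/4) ^ ((d:ℝ)) ≤ (μ (Metric.ball z (t/4))).toReal := by
    have h1 := ENNReal.toReal_mono hflt4 hball4.1
    rwa [ENNReal.toReal_ofReal (by positivity)] at h1
  have hlower : C₀⁻¹ * (t/4) ^ ((d:ℝ)) * (t/4) ≤ ∫ y, φ y ∂μ := by
    have h1 : t/4 * (μ (Metric.ball z (t/4))).toReal ≤ ∫ y in Metric.ball z (t/4), φ y ∂μ := by
      rw [mul_comm, ← smul_eq_mul, ← measureReal_def]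
      apply setIntegral_ge_of_const_le measurableSet_ball hflt4
      · intro y hy
        rw [Metric.mem_ball] at hy
        calc t/4 ≤ t/2 - dist y z := by linarith
        _ ≤ φ y := le_max_left _ _
      · exact hInt.integrableOn
    have h2 : (∫ y in Metric.ball z (t/4), φ y ∂μ) ≤ ∫ y, φ y ∂μ :=
      setIntegral_le_integral hInt (Filter.Eventually.of_forall hφnn)
    have h3 : C₀⁻¹ * (t/4) ^ ((d:ℝ)) * (t/4) ≤ t/4 * (μ (Metric.ball z (t/4))).toReal := by
      rw [mul_comm (C₀⁻¹ * (t/4) ^ ((d:ℝ))) (t/4)]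
      exact mul_le_mul_of_nonneg_left hmeas (by positivity)
    linarith
  -- upper bound from the hypothesis
  have hupper : (∫ y, φ y ∂μ) ≤ 2 * η * (N * r) ^ ((d:ℝ) + 1) := by
    have h1 := hD φ hlip hvanish
    rw [hσ, sub_zero] at h1
    exact (le_abs_self _).trans h1
  -- convert rpow to pow
  have hcast : ∀ a : ℝ, a ^ ((d:ℝ) + 1) = a ^ (d + 1) := by
    intro a
    rw [show ((d:ℝ) + 1) = ((d + 1 : ℕ) : ℝ) by push_cast; ring, Real.rpow_natCast]
  have hcastd : (t/4) ^ ((d:ℝ)) = (t/4) ^ d := Real.rpow_natCast _ d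
  have hkey : C₀⁻¹ * (t/4) ^ (d+1) ≤ 2 * η * (N * r) ^ (d+1) := by
    have := hlower.trans hupper
    rw [hcast, hcastd] at this
    calc C₀⁻¹ * (t/4) ^ (d+1) = C₀⁻¹ * (t/4) ^ d * (t/4) := by ring
    _ ≤ 2 * η * (N * r) ^ (d+1) := this
  -- deduce t ≤ 8 C₀ η' N r
  have hη'pow : η' ^ (d+1) = η := by
    rw [hη'def, ← Real.rpow_natCast (η ^ (1/((d:ℝ)+1))) (d+1), ← Real.rpow_mul hη.le]
    rw [show (1/((d:ℝ)+1)) * ((d+1 : ℕ) : ℝ) = 1 by push_cast; field_simp]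
    exact Real.rpow_one _
  have htle : t ≤ 8 * C₀ * η' * (N * r) := by
    apply le_of_pow_le_pow_left₀ (Nat.succ_ne_zero d) (by positivity)
    have hC₀pow : C₀ ≤ C₀ ^ (d+1) := le_self_pow₀ hC₀ (Nat.succ_ne_zero d)
    have h2pow : (2:ℝ) ≤ 2 ^ (d+1) := le_self_pow₀ (by norm_num) (Nat.succ_ne_zero d)
    calc t ^ (d+1) = C₀ * 4 ^ (d+1) * (C₀⁻¹ * (t/4) ^ (d+1)) := by
          rw [div_pow]
          field_simp
    _ ≤ C₀ * 4 ^ (d+1) * (2 * η * (N * r) ^ (d+1)) := by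
          apply mul_le_mul_of_nonneg_left hkey (by positivity)
    _ = 2 * 4 ^ (d+1) * C₀ * (η * (N * r) ^ (d+1)) := by ring
    _ ≤ 2 ^ (d+1) * 4 ^ (d+1) * C₀ ^ (d+1) * (η * (N * r) ^ (d+1)) := by
          apply mul_le_mul_of_nonneg_right _ (by positivity)
          have h4 : (0:ℝ) < 4 ^ (d+1) := by positivity
          calc 2 * 4 ^ (d+1) * C₀ ≤ 2 ^ (d+1) * 4 ^ (d+1) * C₀ := by
                apply mul_le_mul_of_nonneg_right _ hC₀0.le
                exact mul_le_mul_of_nonneg_right h2pow h4.le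
          _ ≤ 2 ^ (d+1) * 4 ^ (d+1) * C₀ ^ (d+1) := by
                apply mul_le_mul_of_nonneg_left hC₀pow (by positivity)
    _ = (8 * C₀ * η' * (N * r)) ^ (d+1) := by
          have h84 : (2:ℝ)^(d+1) * 4^(d+1) = 8^(d+1) := by rw [← mul_pow]; norm_num
          rw [mul_pow, mul_pow, mul_pow, hη'pow, h84]
          ring
  -- conclude
  have hA : 8 * C₀ * η' * (N * r) ≤ N * r / 4 := by
    have h1 : 8 * C₀ * η' ≤ 8 * C₀ * (32*C₀)⁻¹ := by
      apply mul_le_mul_of_nonneg_left hη'le (by positivity)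
    have h2 : 8 * C₀ * (32*C₀)⁻¹ = 4⁻¹ := by field_simp; ring
    rw [h2] at h1
    calc 8 * C₀ * η' * (N * r) ≤ 4⁻¹ * (N * r) :=
          mul_le_mul_of_nonneg_right h1 hNr.le
    _ = N * r / 4 := by ring
  have hmin : t = Metric.infDist z (P : Set (EuclideanSpace ℝ (Fin n))) := by
    rcases le_or_gt (Metric.infDist z (P : Set (EuclideanSpace ℝ (Fin n)))) (N*r/3) with h | h
    · exact min_eq_left h
    · exfalso
      have : t = N*r/3 := min_eq_right h.le
      rw [this] at htle
      linarith
  rw [← hmin]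
  calc t ≤ 8 * C₀ * η' * (N * r) := htle
  _ = 8 * C₀ * N * η' * r := by ring
end
end

section
/- Let μ be an Ahlfors regular measure of dimension d on E ⊂ ℝⁿ, P a d-plane, σ = c H^d|_P with D_{x,Nr}(μ,σ) ≤ 2η. If ∫_{B(x,Nr/2)} dist(z,P) dμ(z) ≤ 10 η N^{d+1} r^{d+1} and there exists z ∈ E ∩ B(x, Nr/3) with dist(z,P) ≥ η₁ r where η₁ = C₁ N η^{1/(d+1)} ≤ Nr/6, then C₁ can be chosen (depending only on the AR constant of μ, d, n) so large that this yields a contradiction; i.e., the L¹ bound ∫_{B(x,Nr/2)} dist(z,P) dμ(z) ≤ 10 η N^{d+1} r^{d+1} forces the L^∞ bound sup_{z ∈ E ∩ B(x,Nr/3)} dist(z,P) ≤ C₁ N η^{1/(d+1)} r. -/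
open MeasureTheory Metric Set ENNReal

noncomputable section

/-- Chebyshev step: for `μ` Ahlfors regular of dimension `d` supported on `E`, the `L¹`
bound `∫_{B(x,Nr/2)} dist(z,P) dμ(z) ≤ 10 η N^{d+1} r^{d+1}` forces the `L^∞` bound
`dist(z,P) ≤ C₁ N η^{1/(d+1)} r` for `z ∈ E ∩ B(x, Nr/3)`, provided `C₁` (depending only
on `n`, `d`, and the AR constant) is large enough and `η₁ = C₁ N η^{1/(d+1)} ≤ N/6`. -/
theorem l1_to_linfty_dist_bound (n d : ℕ) (C₀ : ℝ) (hd : 0 < d) (hdn : d < n)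
    (hC₀ : 1 ≤ C₀) :
    ∃ C₁ : ℝ, 1 ≤ C₁ ∧
      ∀ (μ : Measure (EuclideanSpace ℝ (Fin n))) (E : Set (EuclideanSpace ℝ (Fin n)))
        (P : AffineSubspace ℝ (EuclideanSpace ℝ (Fin n)))
        (x : EuclideanSpace ℝ (Fin n)) (r N η : ℝ),
        AhlforsRegular μ E (d : ℝ) C₀ → μ Eᶜ = 0 →
        Module.finrank ℝ P.direction = d →
        (P : Set (EuclideanSpace ℝ (Fin n))).Nonempty →
        x ∈ E → 0 < r → 0 < N → 0 < η →
        C₁ * N * η ^ (1 / ((d : ℝ) + 1)) ≤ N / 6 →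
        (∫⁻ z in Metric.ball x (N * r / 2),
            ENNReal.ofReal (Metric.infDist z (P : Set (EuclideanSpace ℝ (Fin n)))) ∂μ)
          ≤ ENNReal.ofReal (10 * η * N ^ ((d : ℝ) + 1) * r ^ ((d : ℝ) + 1)) →
        ∀ z ∈ E ∩ Metric.ball x (N * r / 3),
          Metric.infDist z (P : Set (EuclideanSpace ℝ (Fin n)))
            ≤ C₁ * N * η ^ (1 / ((d : ℝ) + 1)) * r := by
  refine ⟨20 * C₀ + 2, by linarith, ?_⟩
  intro μ E P x r N η hAR hEc hrank hPne hxE hr hN hη hsmall hint z hz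
  obtain ⟨hzE, hzball⟩ := hz
  by_contra hcon
  push_neg at hcon
  set C₁ : ℝ := 20 * C₀ + 2 with hC₁def
  set e : ℝ := η ^ (1 / ((d : ℝ) + 1)) with he
  have hdpos : (0 : ℝ) < (d : ℝ) + 1 := by positivity
  have hepos : 0 < e := Real.rpow_pos_of_pos hη _
  have hC₁pos : (0 : ℝ) < C₁ := by simp only [hC₁def]; linarith
  set s : ℝ := C₁ * N * e * r / 2 with hs
  clear_value C₁ e s
  have hspos : 0 < s := by simp only [hs]; positivity
  have hsmall' : C₁ * N * e ≤ N / 6 := hsmall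
  have hs12 : s ≤ N * r / 12 := by
    have : C₁ * N * e * r ≤ (N / 6) * r := by nlinarith
    simp only [hs]; linarith
  -- ball inclusion
  have hsub : ball z s ⊆ ball x (N * r / 2) := by
    intro w hw
    have h1 : dist w z < s := mem_ball.mp hw
    have h2 : dist z x < N * r / 3 := mem_ball.mp hzball
    have h3 : dist w x ≤ dist w z + dist z x := dist_triangle _ _ _
    exact mem_ball.mpr (by linarith)
  -- pointwise lower bound on the ball
  have hlow : ∀ w ∈ ball z s,
      ENNReal.ofReal s ≤ ENNReal.ofReal (infDist w (P : Set (EuclideanSpace ℝ (Fin n)))) := by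
    intro w hw
    have h1 : dist z w < s := mem_ball'.mp hw
    have h2 : infDist z (P : Set (EuclideanSpace ℝ (Fin n)))
        ≤ infDist w (P : Set (EuclideanSpace ℝ (Fin n))) + dist z w :=
      infDist_le_infDist_add_dist
    have h3 : C₁ * N * e * r < infDist z (P : Set (EuclideanSpace ℝ (Fin n))) := hcon
    have : s ≤ infDist w (P : Set (EuclideanSpace ℝ (Fin n))) := by
      linarith [hs]
    exact ENNReal.ofReal_le_ofReal this
  have hmeas : Measurable fun w : EuclideanSpace ℝ (Fin n) =>
      ENNReal.ofReal (infDist w (P : Set (EuclideanSpace ℝ (Fin n)))) :=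
    (continuous_infDist_pt _).measurable.ennreal_ofReal
  have key : ENNReal.ofReal (s * (C₀⁻¹ * s ^ (d : ℝ)))
      ≤ ∫⁻ w in Metric.ball x (N * r / 2),
          ENNReal.ofReal (infDist w (P : Set (EuclideanSpace ℝ (Fin n)))) ∂μ := by
    calc ENNReal.ofReal (s * (C₀⁻¹ * s ^ (d : ℝ)))
        = ENNReal.ofReal s * ENNReal.ofReal (C₀⁻¹ * s ^ (d : ℝ)) := by
          rw [ENNReal.ofReal_mul hspos.le]
      _ ≤ ENNReal.ofReal s * μ (ball z s) :=
          mul_le_mul_right (hAR z hzE s hspos).1 _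
      _ = ∫⁻ _ in ball z s, ENNReal.ofReal s ∂μ := by
          rw [setLIntegral_const, mul_comm]
      _ ≤ ∫⁻ w in ball z s,
            ENNReal.ofReal (infDist w (P : Set (EuclideanSpace ℝ (Fin n)))) ∂μ :=
          setLIntegral_mono hmeas hlow
      _ ≤ _ := lintegral_mono_set hsub
  have hineq : s * (C₀⁻¹ * s ^ (d : ℝ))
      ≤ 10 * η * N ^ ((d : ℝ) + 1) * r ^ ((d : ℝ) + 1) := by
    have h := key.trans hint
    rwa [ENNReal.ofReal_le_ofReal_iff (by positivity)] at h
  -- rewrite the left side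
  have haeq : s = (C₁ * N * r / 2) * e := by simp only [hs]; ring
  have hapos : (0:ℝ) < C₁ * N * r / 2 := by positivity
  have hse : s ^ ((d : ℝ) + 1) = (C₁ * N * r / 2) ^ ((d : ℝ) + 1) * η := by
    rw [haeq, Real.mul_rpow hapos.le hepos.le, he, ← Real.rpow_mul hη.le,
      one_div_mul_cancel hdpos.ne', Real.rpow_one]
  have hspow : s * (C₀⁻¹ * s ^ (d : ℝ)) = C₀⁻¹ * s ^ ((d : ℝ) + 1) := by
    rw [Real.rpow_add_one hspos.ne']; ring
  have hNr : ((N * r) : ℝ) ^ ((d : ℝ) + 1) = N ^ ((d : ℝ) + 1) * r ^ ((d : ℝ) + 1) :=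
    Real.mul_rpow hN.le hr.le
  have hCsplit : (C₁ * N * r / 2) ^ ((d : ℝ) + 1)
      = (C₁ / 2) ^ ((d : ℝ) + 1) * (N ^ ((d : ℝ) + 1) * r ^ ((d : ℝ) + 1)) := by
    rw [← hNr, ← Real.mul_rpow (by positivity) (by positivity)]
    ring_nf
  have hC2 : C₁ / 2 ≤ (C₁ / 2) ^ ((d : ℝ) + 1) := by
    have h1 : (1 : ℝ) ≤ C₁ / 2 := by simp only [hC₁def]; linarith
    calc C₁ / 2 = (C₁ / 2) ^ (1 : ℝ) := (Real.rpow_one _).symm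
      _ ≤ (C₁ / 2) ^ ((d : ℝ) + 1) := by
        apply Real.rpow_le_rpow_of_exponent_le h1
        have : (1 : ℝ) ≤ (d : ℝ) := by exact_mod_cast hd
        linarith
  -- final contradiction
  have hNrpos : (0:ℝ) < N ^ ((d : ℝ) + 1) * r ^ ((d : ℝ) + 1) := by positivity
  have hC₀pos : (0:ℝ) < C₀ := by linarith
  have hfin : C₀⁻¹ * ((C₁ / 2) ^ ((d : ℝ) + 1) * (N ^ ((d : ℝ) + 1) * r ^ ((d : ℝ) + 1))) * η
      ≤ 10 * η * N ^ ((d : ℝ) + 1) * r ^ ((d : ℝ) + 1) := by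
    calc C₀⁻¹ * ((C₁ / 2) ^ ((d : ℝ) + 1) * (N ^ ((d : ℝ) + 1) * r ^ ((d : ℝ) + 1))) * η
        = s * (C₀⁻¹ * s ^ (d : ℝ)) := by rw [hspow, hse, hCsplit]; ring
      _ ≤ _ := hineq
  have hC2' : (10 * C₀ + 1) ≤ (C₁ / 2) ^ ((d : ℝ) + 1) := by
    have : C₁ / 2 = 10 * C₀ + 1 := by simp only [hC₁def]; ring
    linarith [hC2]
  have hcontr : 10 * η * N ^ ((d : ℝ) + 1) * r ^ ((d : ℝ) + 1)
      < C₀⁻¹ * ((C₁ / 2) ^ ((d : ℝ) + 1) * (N ^ ((d : ℝ) + 1) * r ^ ((d : ℝ) + 1))) * η := by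
    have h1 : C₀⁻¹ * (10 * C₀ + 1) = 10 + C₀⁻¹ := by field_simp
    have h2 : (0:ℝ) < C₀⁻¹ := by positivity
    have h3 : C₀⁻¹ * (10 * C₀ + 1) * (N ^ ((d : ℝ) + 1) * r ^ ((d : ℝ) + 1)) * η
        ≤ C₀⁻¹ * ((C₁ / 2) ^ ((d : ℝ) + 1) * (N ^ ((d : ℝ) + 1) * r ^ ((d : ℝ) + 1))) * η := by
      have := mul_le_mul_of_nonneg_right
        (mul_le_mul_of_nonneg_right (mul_le_mul_of_nonneg_left hC2' h2.le) hNrpos.le) hη.le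
      linarith [this]
    calc 10 * η * N ^ ((d : ℝ) + 1) * r ^ ((d : ℝ) + 1)
        < (10 + C₀⁻¹) * (N ^ ((d : ℝ) + 1) * r ^ ((d : ℝ) + 1)) * η := by
          nlinarith [mul_pos (mul_pos h2 hNrpos) hη]
      _ = C₀⁻¹ * (10 * C₀ + 1) * (N ^ ((d : ℝ) + 1) * r ^ ((d : ℝ) + 1)) * η := by rw [h1]
      _ ≤ _ := h3
  linarith
end
end
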